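/- Suppose there exist C¹ functions A, B : ℝ⁵ → ℂ such that [L̄, T] f = A·(T f) + B·(S f) for every smooth f : ℝ⁵ → ℂ. Let R := [L, S] and define the conjugate operator R̄ by R̄ f := conj( R( conj f ) ). Then for every smooth f: R̄ f = ( L̄(A) + B·L(A) + A² )·(T f) + ( L̄(B) + B·L(B) + 2·A·B )·(S f) + B²·(R f). (This is the paper's Preparatory Lemma expressing R̄ for General Class III₂.) -/

import Mathlib

noncomputable section
open Complex ComplexConjugate

/-- Points of `ℝ⁵`, with coordinates `(x, y, u₁, u₂, u₃)` and `z = x + i y`. -/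
abbrev V5 := Fin 5 → ℝ

/-- Partial derivative in the `j`-th coordinate direction. -/
def pd (j : Fin 5) (f : V5 → ℂ) : V5 → ℂ := fun p => fderiv ℝ f p (Pi.single j 1)

/-- Wirtinger derivative `f_z := (f_x − i f_y)/2`. -/
def wz (f : V5 → ℂ) : V5 → ℂ := fun p => (pd 0 f p - I * pd 1 f p) / 2

/-- Wirtinger derivative `f_z̄ := (f_x + i f_y)/2`. -/
def wzb (f : V5 → ℂ) : V5 → ℂ := fun p => (pd 0 f p + I * pd 1 f p) / 2

variable (a₁ a₂ a₃ : V5 → ℂ)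

/-- The operator `L f := f_z + a₁ f_{u₁} + a₂ f_{u₂} + a₃ f_{u₃}`. -/
def Lop (f : V5 → ℂ) : V5 → ℂ := fun p =>
  wz f p + a₁ p * pd 2 f p + a₂ p * pd 3 f p + a₃ p * pd 4 f p

/-- The operator `L̄ f := f_z̄ + ā₁ f_{u₁} + ā₂ f_{u₂} + ā₃ f_{u₃}`. -/
def Lbop (f : V5 → ℂ) : V5 → ℂ := fun p =>
  wzb f p + conj (a₁ p) * pd 2 f p + conj (a₂ p) * pd 3 f p + conj (a₃ p) * pd 4 f p

/-- The operator `T := i·[L, L̄]`. -/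
def Tof (f : V5 → ℂ) : V5 → ℂ := fun p =>
  I * (Lop a₁ a₂ a₃ (Lbop a₁ a₂ a₃ f) p - Lbop a₁ a₂ a₃ (Lop a₁ a₂ a₃ f) p)

/-- The operator `S := [L, T]`. -/
def Sof (f : V5 → ℂ) : V5 → ℂ := fun p =>
  Lop a₁ a₂ a₃ (Tof a₁ a₂ a₃ f) p - Tof a₁ a₂ a₃ (Lop a₁ a₂ a₃ f) p

/-- The operator `S̄ := [L̄, T]`. -/
def Sbof (f : V5 → ℂ) : V5 → ℂ := fun p =>
  Lbop a₁ a₂ a₃ (Tof a₁ a₂ a₃ f) p - Tof a₁ a₂ a₃ (Lbop a₁ a₂ a₃ f) p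

/-- The operator `R := [L, S]`. -/
def Rof (f : V5 → ℂ) : V5 → ℂ := fun p =>
  Lop a₁ a₂ a₃ (Sof a₁ a₂ a₃ f) p - Sof a₁ a₂ a₃ (Lop a₁ a₂ a₃ f) p

/-- The conjugate operator `R̄ f := conj (R (conj f))`. -/
def Rbof (f : V5 → ℂ) : V5 → ℂ := fun p =>
  conj (Rof a₁ a₂ a₃ (fun q => conj (f q)) p)

lemma pd_smooth (j : Fin 5) {f : V5 → ℂ} (hf : ContDiff ℝ (⊤ : ℕ∞) f) :
    ContDiff ℝ (⊤ : ℕ∞) (pd j f) :=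
  (hf.fderiv_right (by simp)).clm_apply contDiff_const

lemma pd_add (j : Fin 5) {g h : V5 → ℂ} {p : V5} (hg : DifferentiableAt ℝ g p)
    (hh : DifferentiableAt ℝ h p) :
    pd j (fun q => g q + h q) p = pd j g p + pd j h p := by
  simp [pd, fderiv_fun_add hg hh]

lemma pd_sub (j : Fin 5) {g h : V5 → ℂ} {p : V5} (hg : DifferentiableAt ℝ g p)
    (hh : DifferentiableAt ℝ h p) :
    pd j (fun q => g q - h q) p = pd j g p - pd j h p := by
  simp [pd, fderiv_fun_sub hg hh]

lemma pd_const_mul (j : Fin 5) (c : ℂ) {g : V5 → ℂ} {p : V5} (hg : DifferentiableAt ℝ g p) :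
    pd j (fun q => c * g q) p = c * pd j g p := by
  simp [pd, fderiv_const_mul hg c]

lemma pd_mul (j : Fin 5) {g h : V5 → ℂ} {p : V5} (hg : DifferentiableAt ℝ g p)
    (hh : DifferentiableAt ℝ h p) :
    pd j (fun q => g q * h q) p = pd j g p * h p + g p * pd j h p := by
  simp only [pd, fderiv_fun_mul hg hh]
  simp [smul_eq_mul]; ring

lemma pd_conj (j : Fin 5) (g : V5 → ℂ) (p : V5) :
    pd j (fun q => conj (g q)) p = conj (pd j g p) := by
  have h : (fun q => conj (g q)) = (Complex.conjCLE : ℂ ≃L[ℝ] ℂ) ∘ g := rfl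
  simp only [pd, h, ContinuousLinearEquiv.comp_fderiv]
  rfl

/-! ### Smoothness of the operators -/

lemma conj_smooth {g : V5 → ℂ} (hg : ContDiff ℝ (⊤ : ℕ∞) g) :
    ContDiff ℝ (⊤ : ℕ∞) (fun q => conj (g q)) :=
  (Complex.conjCLE : ℂ ≃L[ℝ] ℂ).contDiff.comp hg

variable {a₁ a₂ a₃} in
lemma Lop_smooth (ha₁ : ContDiff ℝ (⊤ : ℕ∞) a₁) (ha₂ : ContDiff ℝ (⊤ : ℕ∞) a₂)
    (ha₃ : ContDiff ℝ (⊤ : ℕ∞) a₃) {f : V5 → ℂ} (hf : ContDiff ℝ (⊤ : ℕ∞) f) :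
    ContDiff ℝ (⊤ : ℕ∞) (Lop a₁ a₂ a₃ f) := by
  unfold Lop wz
  exact ((((pd_smooth 0 hf).sub (contDiff_const.mul (pd_smooth 1 hf))).div_const 2).add
    (ha₁.mul (pd_smooth 2 hf))).add ((ha₂.mul (pd_smooth 3 hf))) |>.add (ha₃.mul (pd_smooth 4 hf))

variable {a₁ a₂ a₃} in
lemma Lbop_smooth (ha₁ : ContDiff ℝ (⊤ : ℕ∞) a₁) (ha₂ : ContDiff ℝ (⊤ : ℕ∞) a₂)
    (ha₃ : ContDiff ℝ (⊤ : ℕ∞) a₃) {f : V5 → ℂ} (hf : ContDiff ℝ (⊤ : ℕ∞) f) :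
    ContDiff ℝ (⊤ : ℕ∞) (Lbop a₁ a₂ a₃ f) := by
  unfold Lbop wzb
  exact ((((pd_smooth 0 hf).add (contDiff_const.mul (pd_smooth 1 hf))).div_const 2).add
    ((conj_smooth ha₁).mul (pd_smooth 2 hf))).add ((conj_smooth ha₂).mul (pd_smooth 3 hf))
    |>.add ((conj_smooth ha₃).mul (pd_smooth 4 hf))

variable {a₁ a₂ a₃} in
lemma Tof_smooth (ha₁ : ContDiff ℝ (⊤ : ℕ∞) a₁) (ha₂ : ContDiff ℝ (⊤ : ℕ∞) a₂)
    (ha₃ : ContDiff ℝ (⊤ : ℕ∞) a₃) {f : V5 → ℂ} (hf : ContDiff ℝ (⊤ : ℕ∞) f) :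
    ContDiff ℝ (⊤ : ℕ∞) (Tof a₁ a₂ a₃ f) := by
  unfold Tof
  exact contDiff_const.mul ((Lop_smooth ha₁ ha₂ ha₃ (Lbop_smooth ha₁ ha₂ ha₃ hf)).sub
    (Lbop_smooth ha₁ ha₂ ha₃ (Lop_smooth ha₁ ha₂ ha₃ hf)))

variable {a₁ a₂ a₃} in
lemma Sof_smooth (ha₁ : ContDiff ℝ (⊤ : ℕ∞) a₁) (ha₂ : ContDiff ℝ (⊤ : ℕ∞) a₂)
    (ha₃ : ContDiff ℝ (⊤ : ℕ∞) a₃) {f : V5 → ℂ} (hf : ContDiff ℝ (⊤ : ℕ∞) f) :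
    ContDiff ℝ (⊤ : ℕ∞) (Sof a₁ a₂ a₃ f) := by
  unfold Sof
  exact (Lop_smooth ha₁ ha₂ ha₃ (Tof_smooth ha₁ ha₂ ha₃ hf)).sub
    (Tof_smooth ha₁ ha₂ ha₃ (Lop_smooth ha₁ ha₂ ha₃ hf))

variable {a₁ a₂ a₃} in
lemma Sbof_smooth (ha₁ : ContDiff ℝ (⊤ : ℕ∞) a₁) (ha₂ : ContDiff ℝ (⊤ : ℕ∞) a₂)
    (ha₃ : ContDiff ℝ (⊤ : ℕ∞) a₃) {f : V5 → ℂ} (hf : ContDiff ℝ (⊤ : ℕ∞) f) :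
    ContDiff ℝ (⊤ : ℕ∞) (Sbof a₁ a₂ a₃ f) := by
  unfold Sbof
  exact (Lbop_smooth ha₁ ha₂ ha₃ (Tof_smooth ha₁ ha₂ ha₃ hf)).sub
    (Tof_smooth ha₁ ha₂ ha₃ (Lbop_smooth ha₁ ha₂ ha₃ hf))

/-! ### Algebraic properties of `Lop`, `Lbop`, `Tof` -/

lemma Lop_add {g h : V5 → ℂ} {p : V5} (hg : DifferentiableAt ℝ g p)
    (hh : DifferentiableAt ℝ h p) :
    Lop a₁ a₂ a₃ (fun q => g q + h q) p = Lop a₁ a₂ a₃ g p + Lop a₁ a₂ a₃ h p := by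
  simp only [Lop, wz, pd_add _ hg hh]; ring

lemma Lop_sub {g h : V5 → ℂ} {p : V5} (hg : DifferentiableAt ℝ g p)
    (hh : DifferentiableAt ℝ h p) :
    Lop a₁ a₂ a₃ (fun q => g q - h q) p = Lop a₁ a₂ a₃ g p - Lop a₁ a₂ a₃ h p := by
  simp only [Lop, wz, pd_sub _ hg hh]; ring

lemma Lop_const_mul (c : ℂ) {g : V5 → ℂ} {p : V5} (hg : DifferentiableAt ℝ g p) :
    Lop a₁ a₂ a₃ (fun q => c * g q) p = c * Lop a₁ a₂ a₃ g p := by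
  simp only [Lop, wz, pd_const_mul _ c hg]; ring

lemma Lop_mul {g h : V5 → ℂ} {p : V5} (hg : DifferentiableAt ℝ g p)
    (hh : DifferentiableAt ℝ h p) :
    Lop a₁ a₂ a₃ (fun q => g q * h q) p
      = Lop a₁ a₂ a₃ g p * h p + g p * Lop a₁ a₂ a₃ h p := by
  simp only [Lop, wz, pd_mul _ hg hh]; ring

lemma Lbop_add {g h : V5 → ℂ} {p : V5} (hg : DifferentiableAt ℝ g p)
    (hh : DifferentiableAt ℝ h p) :
    Lbop a₁ a₂ a₃ (fun q => g q + h q) p = Lbop a₁ a₂ a₃ g p + Lbop a₁ a₂ a₃ h p := by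
  simp only [Lbop, wzb, pd_add _ hg hh]; ring

lemma Lbop_sub {g h : V5 → ℂ} {p : V5} (hg : DifferentiableAt ℝ g p)
    (hh : DifferentiableAt ℝ h p) :
    Lbop a₁ a₂ a₃ (fun q => g q - h q) p = Lbop a₁ a₂ a₃ g p - Lbop a₁ a₂ a₃ h p := by
  simp only [Lbop, wzb, pd_sub _ hg hh]; ring

lemma Lbop_const_mul (c : ℂ) {g : V5 → ℂ} {p : V5} (hg : DifferentiableAt ℝ g p) :
    Lbop a₁ a₂ a₃ (fun q => c * g q) p = c * Lbop a₁ a₂ a₃ g p := by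
  simp only [Lbop, wzb, pd_const_mul _ c hg]; ring

lemma Lbop_mul {g h : V5 → ℂ} {p : V5} (hg : DifferentiableAt ℝ g p)
    (hh : DifferentiableAt ℝ h p) :
    Lbop a₁ a₂ a₃ (fun q => g q * h q) p
      = Lbop a₁ a₂ a₃ g p * h p + g p * Lbop a₁ a₂ a₃ h p := by
  simp only [Lbop, wzb, pd_mul _ hg hh]; ring

lemma Lop_conj (g : V5 → ℂ) (p : V5) :
    Lop a₁ a₂ a₃ (fun q => conj (g q)) p = conj (Lbop a₁ a₂ a₃ g p) := by
  simp only [Lop, Lbop, wz, wzb, pd_conj]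
  simp only [map_add, map_div₀, map_sub, map_mul, Complex.conj_conj, Complex.conj_I,
    map_ofNat]
  ring

lemma Lbop_conj (g : V5 → ℂ) (p : V5) :
    Lbop a₁ a₂ a₃ (fun q => conj (g q)) p = conj (Lop a₁ a₂ a₃ g p) := by
  simp only [Lop, Lbop, wz, wzb, pd_conj]
  simp only [map_add, map_div₀, map_sub, map_mul, Complex.conj_conj, Complex.conj_I,
    map_ofNat]
  ring

/-- Extract pointwise differentiability from smoothness. -/
lemma dA {g : V5 → ℂ} (hg : ContDiff ℝ (⊤ : ℕ∞) g) (p : V5) : DifferentiableAt ℝ g p :=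
  (hg.differentiable (by simp)).differentiableAt

variable {a₁ a₂ a₃}

lemma Tof_conj (g : V5 → ℂ) (p : V5) :
    Tof a₁ a₂ a₃ (fun q => conj (g q)) p = conj (Tof a₁ a₂ a₃ g p) := by
  have h1 : Lbop a₁ a₂ a₃ (fun q => conj (g q)) = fun q => conj (Lop a₁ a₂ a₃ g q) := by
    funext q; exact Lbop_conj _ _ _ g q
  have h2 : Lop a₁ a₂ a₃ (fun q => conj (g q)) = fun q => conj (Lbop a₁ a₂ a₃ g q) := by
    funext q; exact Lop_conj _ _ _ g q
  simp only [Tof, h1, h2, Lop_conj, Lbop_conj]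
  simp only [map_mul, map_sub, Complex.conj_I]
  ring

/-- The commutation relation `L̄ (L g) = L (L̄ g) + i T g`, purely from the definition of `T`. -/
lemma Lbop_Lop_comm (g : V5 → ℂ) (p : V5) :
    Lbop a₁ a₂ a₃ (Lop a₁ a₂ a₃ g) p
      = Lop a₁ a₂ a₃ (Lbop a₁ a₂ a₃ g) p + I * Tof a₁ a₂ a₃ g p := by
  simp only [Tof]
  linear_combination (Lbop a₁ a₂ a₃ (Lop a₁ a₂ a₃ g) p
    - Lop a₁ a₂ a₃ (Lbop a₁ a₂ a₃ g) p) * Complex.I_sq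

section
variable (ha₁ : ContDiff ℝ (⊤ : ℕ∞) a₁) (ha₂ : ContDiff ℝ (⊤ : ℕ∞) a₂)
    (ha₃ : ContDiff ℝ (⊤ : ℕ∞) a₃)
include ha₁ ha₂ ha₃

lemma Tof_add {g h : V5 → ℂ} (hg : ContDiff ℝ (⊤ : ℕ∞) g)
    (hh : ContDiff ℝ (⊤ : ℕ∞) h) (p : V5) :
    Tof a₁ a₂ a₃ (fun q => g q + h q) p = Tof a₁ a₂ a₃ g p + Tof a₁ a₂ a₃ h p := by
  have h1 : Lbop a₁ a₂ a₃ (fun q => g q + h q)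
      = fun q => Lbop a₁ a₂ a₃ g q + Lbop a₁ a₂ a₃ h q := by
    funext q; exact Lbop_add _ _ _ (dA hg q) (dA hh q)
  have h2 : Lop a₁ a₂ a₃ (fun q => g q + h q)
      = fun q => Lop a₁ a₂ a₃ g q + Lop a₁ a₂ a₃ h q := by
    funext q; exact Lop_add _ _ _ (dA hg q) (dA hh q)
  simp only [Tof, h1, h2]
  rw [Lop_add _ _ _ (dA (Lbop_smooth ha₁ ha₂ ha₃ hg) p) (dA (Lbop_smooth ha₁ ha₂ ha₃ hh) p),
    Lbop_add _ _ _ (dA (Lop_smooth ha₁ ha₂ ha₃ hg) p) (dA (Lop_smooth ha₁ ha₂ ha₃ hh) p)]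
  ring

lemma Tof_const_mul (c : ℂ) {g : V5 → ℂ} (hg : ContDiff ℝ (⊤ : ℕ∞) g) (p : V5) :
    Tof a₁ a₂ a₃ (fun q => c * g q) p = c * Tof a₁ a₂ a₃ g p := by
  have h1 : Lbop a₁ a₂ a₃ (fun q => c * g q) = fun q => c * Lbop a₁ a₂ a₃ g q := by
    funext q; exact Lbop_const_mul _ _ _ c (dA hg q)
  have h2 : Lop a₁ a₂ a₃ (fun q => c * g q) = fun q => c * Lop a₁ a₂ a₃ g q := by
    funext q; exact Lop_const_mul _ _ _ c (dA hg q)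
  simp only [Tof, h1, h2]
  rw [Lop_const_mul _ _ _ c (dA (Lbop_smooth ha₁ ha₂ ha₃ hg) p),
    Lbop_const_mul _ _ _ c (dA (Lop_smooth ha₁ ha₂ ha₃ hg) p)]
  ring

omit ha₁ ha₂ ha₃ in
lemma Sof_conj (g : V5 → ℂ) (p : V5) :
    Sof a₁ a₂ a₃ (fun q => conj (g q)) p = conj (Sbof a₁ a₂ a₃ g p) := by
  have h1 : Tof a₁ a₂ a₃ (fun q => conj (g q)) = fun q => conj (Tof a₁ a₂ a₃ g q) := by
    funext q; exact Tof_conj g q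
  have h2 : Lop a₁ a₂ a₃ (fun q => conj (g q)) = fun q => conj (Lbop a₁ a₂ a₃ g q) := by
    funext q; exact Lop_conj _ _ _ g q
  simp only [Sof, Sbof, h1, h2, Lop_conj, Tof_conj, map_sub]

end

section main
variable (ha₁ : ContDiff ℝ (⊤ : ℕ∞) a₁) (ha₂ : ContDiff ℝ (⊤ : ℕ∞) a₂)
    (ha₃ : ContDiff ℝ (⊤ : ℕ∞) a₃) {A B : V5 → ℂ}
    (hA : ContDiff ℝ 1 A) (hB : ContDiff ℝ 1 B)
    (hAB : ∀ f : V5 → ℂ, ContDiff ℝ (⊤ : ℕ∞) f → ∀ p,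
        Lbop a₁ a₂ a₃ (Tof a₁ a₂ a₃ f) p - Tof a₁ a₂ a₃ (Lbop a₁ a₂ a₃ f) p
          = A p * Tof a₁ a₂ a₃ f p + B p * Sof a₁ a₂ a₃ f p)
include ha₁ ha₂ ha₃ hA hB hAB

/-- The key commutation relation `[L̄, S] = L(A)·T + L(B)·S + A·S + B·R`. -/
lemma Lbop_Sof_comm {f : V5 → ℂ} (hf : ContDiff ℝ (⊤ : ℕ∞) f) (p : V5) :
    Lbop a₁ a₂ a₃ (Sof a₁ a₂ a₃ f) p
      = Sof a₁ a₂ a₃ (Lbop a₁ a₂ a₃ f) p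
        + (Lop a₁ a₂ a₃ A p * Tof a₁ a₂ a₃ f p + Lop a₁ a₂ a₃ B p * Sof a₁ a₂ a₃ f p
            + A p * Sof a₁ a₂ a₃ f p + B p * Rof a₁ a₂ a₃ f p) := by
  have hA' : DifferentiableAt ℝ A p := (hA.differentiable one_ne_zero).differentiableAt
  have hB' : DifferentiableAt ℝ B p := (hB.differentiable one_ne_zero).differentiableAt
  have hLf := Lop_smooth ha₁ ha₂ ha₃ hf
  have hLbf := Lbop_smooth ha₁ ha₂ ha₃ hf
  have hTf := Tof_smooth ha₁ ha₂ ha₃ hf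
  have hSf := Sof_smooth ha₁ ha₂ ha₃ hf
  have hTLbf := Tof_smooth ha₁ ha₂ ha₃ hLbf
  have hLTf := Lop_smooth ha₁ ha₂ ha₃ hTf
  have hTLf := Tof_smooth ha₁ ha₂ ha₃ hLf
  have hSLf := Sof_smooth ha₁ ha₂ ha₃ hLf
  have hLbTf := Lbop_smooth ha₁ ha₂ ha₃ hTf
  have hLSf := Lop_smooth ha₁ ha₂ ha₃ hSf
  have hLLbf := Lop_smooth ha₁ ha₂ ha₃ hLbf
  -- e1 : split `Lbop (Sof f)` into the two pieces of `Sof f`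
  have e1 : Lbop a₁ a₂ a₃ (Sof a₁ a₂ a₃ f) p
      = Lbop a₁ a₂ a₃ (Lop a₁ a₂ a₃ (Tof a₁ a₂ a₃ f)) p
        - Lbop a₁ a₂ a₃ (Tof a₁ a₂ a₃ (Lop a₁ a₂ a₃ f)) p :=
    Lbop_sub a₁ a₂ a₃ (g := Lop a₁ a₂ a₃ (Tof a₁ a₂ a₃ f))
      (h := Tof a₁ a₂ a₃ (Lop a₁ a₂ a₃ f)) (dA hLTf p) (dA hTLf p)
  -- e2 : commutation of L̄ past L on `Tof f`
  have e2 := Lbop_Lop_comm (a₁ := a₁) (a₂ := a₂) (a₃ := a₃) (Tof a₁ a₂ a₃ f) p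
  -- e3 : expand `Lop (Lbop (Tof f))` using the hypothesis `[L̄,T] = A·T + B·S`
  have hTbf : Lbop a₁ a₂ a₃ (Tof a₁ a₂ a₃ f)
      = fun q => Tof a₁ a₂ a₃ (Lbop a₁ a₂ a₃ f) q
          + (A q * Tof a₁ a₂ a₃ f q + B q * Sof a₁ a₂ a₃ f q) := by
    funext q; linear_combination hAB f hf q
  have e3 : Lop a₁ a₂ a₃ (Lbop a₁ a₂ a₃ (Tof a₁ a₂ a₃ f)) p
      = Lop a₁ a₂ a₃ (Tof a₁ a₂ a₃ (Lbop a₁ a₂ a₃ f)) p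
        + ((Lop a₁ a₂ a₃ A p * Tof a₁ a₂ a₃ f p + A p * Lop a₁ a₂ a₃ (Tof a₁ a₂ a₃ f) p)
          + (Lop a₁ a₂ a₃ B p * Sof a₁ a₂ a₃ f p + B p * Lop a₁ a₂ a₃ (Sof a₁ a₂ a₃ f) p)) := by
    rw [hTbf,
      Lop_add a₁ a₂ a₃ (dA hTLbf p) ((hA'.fun_mul (dA hTf p)).fun_add (hB'.fun_mul (dA hSf p))),
      Lop_add a₁ a₂ a₃ (hA'.fun_mul (dA hTf p)) (hB'.fun_mul (dA hSf p)),
      Lop_mul a₁ a₂ a₃ hA' (dA hTf p), Lop_mul a₁ a₂ a₃ hB' (dA hSf p)]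
  -- e4 : apply the hypothesis to `Lop f`
  have e4 : Lbop a₁ a₂ a₃ (Tof a₁ a₂ a₃ (Lop a₁ a₂ a₃ f)) p
      = Tof a₁ a₂ a₃ (Lbop a₁ a₂ a₃ (Lop a₁ a₂ a₃ f)) p
        + (A p * Tof a₁ a₂ a₃ (Lop a₁ a₂ a₃ f) p
            + B p * Sof a₁ a₂ a₃ (Lop a₁ a₂ a₃ f) p) := by
    linear_combination hAB (Lop a₁ a₂ a₃ f) hLf p
  -- e5 : commutation inside `Tof`
  have hLbL : Lbop a₁ a₂ a₃ (Lop a₁ a₂ a₃ f)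
      = fun q => Lop a₁ a₂ a₃ (Lbop a₁ a₂ a₃ f) q + I * Tof a₁ a₂ a₃ f q :=
    funext (Lbop_Lop_comm f)
  have e5 : Tof a₁ a₂ a₃ (Lbop a₁ a₂ a₃ (Lop a₁ a₂ a₃ f)) p
      = Tof a₁ a₂ a₃ (Lop a₁ a₂ a₃ (Lbop a₁ a₂ a₃ f)) p
        + I * Tof a₁ a₂ a₃ (Tof a₁ a₂ a₃ f) p := by
    rw [hLbL, Tof_add ha₁ ha₂ ha₃ hLLbf (contDiff_const.mul hTf) p,
      Tof_const_mul ha₁ ha₂ ha₃ I hTf p]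
  -- definitional unfoldings
  have e6 : Sof a₁ a₂ a₃ (Lbop a₁ a₂ a₃ f) p
      = Lop a₁ a₂ a₃ (Tof a₁ a₂ a₃ (Lbop a₁ a₂ a₃ f)) p
        - Tof a₁ a₂ a₃ (Lop a₁ a₂ a₃ (Lbop a₁ a₂ a₃ f)) p := rfl
  have e7 : Sof a₁ a₂ a₃ f p
      = Lop a₁ a₂ a₃ (Tof a₁ a₂ a₃ f) p - Tof a₁ a₂ a₃ (Lop a₁ a₂ a₃ f) p := rfl
  have e8 : Rof a₁ a₂ a₃ f p
      = Lop a₁ a₂ a₃ (Sof a₁ a₂ a₃ f) p - Sof a₁ a₂ a₃ (Lop a₁ a₂ a₃ f) p := rfl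
  linear_combination e1 + e2 + e3 - e4 - e5 - e6 - A p * e7 - B p * e8

/-- `R̄ f = L̄ (S̄ f) − S̄ (L̄ f)`. -/
lemma Rbof_eq {f : V5 → ℂ} (hf : ContDiff ℝ (⊤ : ℕ∞) f) (p : V5) :
    Rbof a₁ a₂ a₃ f p
      = Lbop a₁ a₂ a₃ (Sbof a₁ a₂ a₃ f) p - Sbof a₁ a₂ a₃ (Lbop a₁ a₂ a₃ f) p := by
  have c1 : Sof a₁ a₂ a₃ (fun q => conj (f q))
      = fun q => conj (Sbof a₁ a₂ a₃ f q) := funext (Sof_conj f)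
  have c2 : Lop a₁ a₂ a₃ (fun q => conj (f q))
      = fun q => conj (Lbop a₁ a₂ a₃ f q) := funext (Lop_conj a₁ a₂ a₃ f)
  simp only [Rbof, Rof, c1, c2, Lop_conj a₁ a₂ a₃ (Sbof a₁ a₂ a₃ f) p,
    Sof_conj (Lbop a₁ a₂ a₃ f) p, map_sub, Complex.conj_conj]

end main

variable (a₁ a₂ a₃)

/-- The paper's Preparatory Lemma for General Class III₂: if `[L̄, T] = A·T + B·S` with
`A, B` of class `C¹`, then
`R̄ = (L̄(A) + B·L(A) + A²)·T + (L̄(B) + B·L(B) + 2AB)·S + B²·R`. -/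
theorem class_III₂_preparatory_lemma
    (ha₁ : ContDiff ℝ (⊤ : ℕ∞) a₁) (ha₂ : ContDiff ℝ (⊤ : ℕ∞) a₂)
    (ha₃ : ContDiff ℝ (⊤ : ℕ∞) a₃) (A B : V5 → ℂ)
    (hA : ContDiff ℝ 1 A) (hB : ContDiff ℝ 1 B)
    (hAB : ∀ f : V5 → ℂ, ContDiff ℝ (⊤ : ℕ∞) f → ∀ p,
        Lbop a₁ a₂ a₃ (Tof a₁ a₂ a₃ f) p - Tof a₁ a₂ a₃ (Lbop a₁ a₂ a₃ f) p
          = A p * Tof a₁ a₂ a₃ f p + B p * Sof a₁ a₂ a₃ f p) :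
    ∀ f : V5 → ℂ, ContDiff ℝ (⊤ : ℕ∞) f → ∀ p,
      Rbof a₁ a₂ a₃ f p
        = (Lbop a₁ a₂ a₃ A p + B p * Lop a₁ a₂ a₃ A p + A p ^ 2) * Tof a₁ a₂ a₃ f p
          + (Lbop a₁ a₂ a₃ B p + B p * Lop a₁ a₂ a₃ B p + 2 * A p * B p)
              * Sof a₁ a₂ a₃ f p
          + B p ^ 2 * Rof a₁ a₂ a₃ f p := by

  intro f hf p
  have hA' : DifferentiableAt ℝ A p := (hA.differentiable one_ne_zero).differentiableAt
  have hB' : DifferentiableAt ℝ B p := (hB.differentiable one_ne_zero).differentiableAt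
  have hLbf := Lbop_smooth ha₁ ha₂ ha₃ hf
  have hTf := Tof_smooth ha₁ ha₂ ha₃ hf
  have hSf := Sof_smooth ha₁ ha₂ ha₃ hf
  have g1 := Rbof_eq ha₁ ha₂ ha₃ hA hB hAB hf p
  have hfn : Sbof a₁ a₂ a₃ f
      = fun q => A q * Tof a₁ a₂ a₃ f q + B q * Sof a₁ a₂ a₃ f q := funext (hAB f hf)
  have g2 : Lbop a₁ a₂ a₃ (Sbof a₁ a₂ a₃ f) p
      = (Lbop a₁ a₂ a₃ A p * Tof a₁ a₂ a₃ f p + A p * Lbop a₁ a₂ a₃ (Tof a₁ a₂ a₃ f) p)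
        + (Lbop a₁ a₂ a₃ B p * Sof a₁ a₂ a₃ f p
            + B p * Lbop a₁ a₂ a₃ (Sof a₁ a₂ a₃ f) p) := by
    rw [hfn, Lbop_add a₁ a₂ a₃ (hA'.fun_mul (dA hTf p)) (hB'.fun_mul (dA hSf p)),
      Lbop_mul a₁ a₂ a₃ hA' (dA hTf p), Lbop_mul a₁ a₂ a₃ hB' (dA hSf p)]
  have g3 : Lbop a₁ a₂ a₃ (Tof a₁ a₂ a₃ f) p
      = Tof a₁ a₂ a₃ (Lbop a₁ a₂ a₃ f) p
        + (A p * Tof a₁ a₂ a₃ f p + B p * Sof a₁ a₂ a₃ f p) := by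
    linear_combination hAB f hf p
  have g4 := Lbop_Sof_comm ha₁ ha₂ ha₃ hA hB hAB hf p
  have g5 : Sbof a₁ a₂ a₃ (Lbop a₁ a₂ a₃ f) p
      = A p * Tof a₁ a₂ a₃ (Lbop a₁ a₂ a₃ f) p
        + B p * Sof a₁ a₂ a₃ (Lbop a₁ a₂ a₃ f) p := hAB (Lbop a₁ a₂ a₃ f) hLbf p
  linear_combination g1 + g2 + A p * g3 + B p * g4 - g5

end
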